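/- Let m, t, a be positive integers with gcd(ta, m) = gcd(t, m), and let ζ_m = e^{2πi/m}. Then the product of (1 − ζ_m^{jta})/(1 − ζ_m^{jt}) over all j in {1, …, m} with m ∤ jt, multiplied by the product of (1 + ζ_m^{jt} + ζ_m^{2jt} + ⋯ + ζ_m^{(a−1)jt}) over all j in {1, …, m} with m ∣ jt, equals a^{gcd(m, t)}. -/

import Mathlib

open Finset Complex

/-- Product of a periodic function over `range (d * n)`. -/
lemma aux_prod_range_periodic (F : ℕ → ℂ) (n d : ℕ) (hF : ∀ j, F (j + n) = F j) :
    ∏ j ∈ Finset.range (d * n), F j = (∏ j ∈ Finset.range n, F j) ^ d := by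
  induction d with
  | zero => simp
  | succ d ih =>
    have hshift : ∀ k i : ℕ, F (k * n + i) = F i := by
      intro k
      induction k with
      | zero => simp
      | succ k ihk =>
        intro i
        have h1 : (k + 1) * n + i = (k * n + i) + n := by ring
        rw [h1, hF, ihk]
    have h2 : (d + 1) * n = d * n + n := by ring
    rw [h2, Finset.prod_range_add, ih]
    have h3 : ∏ i ∈ Finset.range n, F (d * n + i) = ∏ i ∈ Finset.range n, F i :=
      Finset.prod_congr rfl fun i _ => hshift d i
    rw [h3]; ring

/-- The product of `1 - ξ^j` over the nontrivial `n`-th roots of unity is `n`. -/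
lemma aux_prod_one_sub (n : ℕ) (hn : 0 < n) {ξ : ℂ} (hξ : IsPrimitiveRoot ξ n) :
    ∏ j ∈ Finset.Ico 1 n, (1 - ξ ^ j) = (n : ℂ) := by
  classical
  have himg : Polynomial.nthRootsFinset n (1 : ℂ) = (Finset.range n).image (ξ ^ ·) := by
    ext x
    rw [Polynomial.mem_nthRootsFinset hn (1 : ℂ), Finset.mem_image]
    constructor
    · intro hx
      haveI : NeZero n := ⟨hn.ne'⟩
      obtain ⟨i, hi, rfl⟩ := hξ.eq_pow_of_pow_eq_one hx
      exact ⟨i, Finset.mem_range.2 hi, rfl⟩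
    · rintro ⟨i, _, rfl⟩
      show (ξ ^ i) ^ n = 1
      rw [← pow_mul, mul_comm, pow_mul, hξ.pow_eq_one, one_pow]
  have hpoly : (Polynomial.X : Polynomial ℂ) ^ n - 1 =
      ∏ j ∈ Finset.range n, (Polynomial.X - Polynomial.C (ξ ^ j)) := by
    rw [Polynomial.X_pow_sub_one_eq_prod hn hξ, himg, Finset.prod_image]
    intro i hi j hj hij
    exact hξ.pow_inj (Finset.mem_range.1 hi) (Finset.mem_range.1 hj) hij
  have hsplit : ∏ j ∈ Finset.range n, (Polynomial.X - Polynomial.C (ξ ^ j)) =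
      (Polynomial.X - 1) * ∏ j ∈ Finset.Ico 1 n, (Polynomial.X - Polynomial.C (ξ ^ j)) := by
    rw [Finset.range_eq_Ico, Finset.prod_eq_prod_Ico_succ_bot hn]
    simp
  have hgeom : (Polynomial.X : Polynomial ℂ) ^ n - 1 =
      (Polynomial.X - 1) * ∑ k ∈ Finset.range n, Polynomial.X ^ k := by
    rw [mul_comm, geom_sum_mul]
  have hX1 : (Polynomial.X : Polynomial ℂ) - 1 ≠ 0 := by
    have := Polynomial.X_sub_C_ne_zero (1 : ℂ)
    simpa using this
  have hcancel : ∏ j ∈ Finset.Ico 1 n, (Polynomial.X - Polynomial.C (ξ ^ j)) =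
      ∑ k ∈ Finset.range n, (Polynomial.X : Polynomial ℂ) ^ k := by
    apply mul_left_cancel₀ hX1
    rw [← hsplit, ← hpoly, hgeom]
  have := congrArg (Polynomial.eval 1) hcancel
  simp only [Polynomial.eval_prod, Polynomial.eval_sub, Polynomial.eval_X, Polynomial.eval_C,
    Polynomial.eval_finset_sum, Polynomial.eval_pow, one_pow, Finset.sum_const,
    Finset.card_range, nsmul_eq_mul, mul_one] at this
  rw [this]

/-- If `ζ` is a primitive `m`-th root of unity, then `ζ^s` is a primitive
`m / gcd m s`-th root of unity. -/
lemma aux_pow_gcd {m : ℕ} (hm : 0 < m) {ζ : ℂ} (hζ : IsPrimitiveRoot ζ m) (s : ℕ) :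
    IsPrimitiveRoot (ζ ^ s) (m / Nat.gcd m s) := by
  have hd : 0 < Nat.gcd m s := Nat.gcd_pos_of_pos_left s hm
  have hdm : Nat.gcd m s ∣ m := Nat.gcd_dvd_left m s
  have hds : Nat.gcd m s ∣ s := Nat.gcd_dvd_right m s
  have h1 : IsPrimitiveRoot (ζ ^ Nat.gcd m s) (m / Nat.gcd m s) :=
    hζ.pow hm (Nat.mul_div_cancel' hdm).symm
  have hcop : Nat.Coprime (s / Nat.gcd m s) (m / Nat.gcd m s) :=
    (Nat.coprime_div_gcd_div_gcd hd).symm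
  have h2 : ζ ^ s = (ζ ^ Nat.gcd m s) ^ (s / Nat.gcd m s) := by
    rw [← pow_mul, Nat.mul_div_cancel' hds]
  rw [h2]
  exact h1.pow_of_coprime _ hcop

lemma aux_dvd_iff {m : ℕ} (hm : 0 < m) {ζ : ℂ} (hζ : IsPrimitiveRoot ζ m) (s j : ℕ) :
    m ∣ j * s ↔ (m / Nat.gcd m s) ∣ j := by
  rw [← hζ.pow_eq_one_iff_dvd, mul_comm j s, pow_mul,
    (aux_pow_gcd hm hζ s).pow_eq_one_iff_dvd]

/-- Key computation: the filtered product of `1 - ζ^{js}` equals `(m/d)^d`. -/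
lemma aux_main {m : ℕ} (hm : 0 < m) {ζ : ℂ} (hζ : IsPrimitiveRoot ζ m) (s : ℕ) :
    ∏ j ∈ (Finset.Icc 1 m).filter (fun j => ¬ m ∣ j * s), (1 - ζ ^ (j * s)) =
      ((m / Nat.gcd m s : ℕ) : ℂ) ^ (Nat.gcd m s) := by
  classical
  set d : ℕ := Nat.gcd m s with hddef
  set n : ℕ := m / d with hndef
  have hd : 0 < d := Nat.gcd_pos_of_pos_left s hm
  have hdm : d ∣ m := Nat.gcd_dvd_left m s
  have hmn : m = d * n := (Nat.mul_div_cancel' hdm).symm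
  have hn : 0 < n := Nat.div_pos (Nat.le_of_dvd hm hdm) hd
  have hξ : IsPrimitiveRoot (ζ ^ s) n := aux_pow_gcd hm hζ s
  have hiff : ∀ j, m ∣ j * s ↔ n ∣ j := fun j => aux_dvd_iff hm hζ s j
  have hnm : n ∣ m := ⟨d, by rw [hmn]; ring⟩
  have hset : (Finset.Icc 1 m).filter (fun j => ¬ m ∣ j * s) =
      (Finset.range m).filter (fun j => ¬ n ∣ j) := by
    ext j
    simp only [Finset.mem_filter, Finset.mem_Icc, Finset.mem_range, hiff j]
    constructor
    · rintro ⟨⟨h1, h2⟩, h3⟩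
      refine ⟨?_, h3⟩
      rcases h2.lt_or_eq with h | rfl
      · exact h
      · exact absurd hnm h3
    · rintro ⟨h1, h2⟩
      refine ⟨⟨?_, h1.le⟩, h2⟩
      rcases Nat.eq_zero_or_pos j with rfl | hj
      · exact absurd (dvd_zero n) h2
      · exact hj
  have hfac : ∀ j, ζ ^ (j * s) = (ζ ^ s) ^ j := by
    intro j; rw [mul_comm j s, pow_mul]
  rw [hset]
  rw [Finset.prod_filter]
  set F : ℕ → ℂ := fun j => if n ∣ j then 1 else 1 - (ζ ^ s) ^ j with hFdef
  have hFeq : ∀ j ∈ Finset.range m,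
      (if ¬ n ∣ j then 1 - ζ ^ (j * s) else 1) = F j := by
    intro j _
    simp only [hFdef, hfac j]
    split_ifs with h1 h2 h2 <;> first | rfl | (exact absurd h2 h1) | (exact absurd h1 h2) |
      (exact absurd (not_not.1 h1) h2)
  rw [Finset.prod_congr rfl hFeq]
  have hper : ∀ j, F (j + n) = F j := by
    intro j
    have hdvd : n ∣ j + n ↔ n ∣ j := Nat.dvd_add_self_right
    simp only [hFdef, hdvd, pow_add, hξ.pow_eq_one, mul_one]
  have hbase : ∏ j ∈ Finset.range n, F j = (n : ℂ) := by
    rw [Finset.range_eq_Ico, Finset.prod_eq_prod_Ico_succ_bot hn]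
    have hF0 : F 0 = 1 := by simp [hFdef]
    rw [hF0, one_mul]
    have : ∀ j ∈ Finset.Ico 1 n, F j = 1 - (ζ ^ s) ^ j := by
      intro j hj
      rw [Finset.mem_Ico] at hj
      have : ¬ n ∣ j := by
        intro hdvd
        have := Nat.le_of_dvd (by omega) hdvd
        omega
      simp [hFdef, this]
    rw [Finset.prod_congr rfl this]
    exact aux_prod_one_sub n hn hξ
  calc ∏ j ∈ Finset.range m, F j = ∏ j ∈ Finset.range (d * n), F j := by rw [← hmn]
    _ = (∏ j ∈ Finset.range n, F j) ^ d := aux_prod_range_periodic F n d hper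
    _ = (n : ℂ) ^ d := by rw [hbase]

theorem prod_ratio_eq_pow (m t a : ℕ) (hm : 0 < m) (ht : 0 < t) (ha : 0 < a)
    (hgcd : Nat.gcd (t * a) m = Nat.gcd t m) :
    (∏ j ∈ (Finset.Icc 1 m).filter (fun j => ¬ m ∣ j * t),
        (1 - Complex.exp (2 * Real.pi * Complex.I / m) ^ (j * t * a)) /
          (1 - Complex.exp (2 * Real.pi * Complex.I / m) ^ (j * t))) *
      (∏ j ∈ (Finset.Icc 1 m).filter (fun j => m ∣ j * t),
        ∑ k ∈ Finset.range a, Complex.exp (2 * Real.pi * Complex.I / m) ^ (k * j * t)) =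
      (a : ℂ) ^ (Nat.gcd m t) := by
  classical
  set ζ : ℂ := Complex.exp (2 * Real.pi * Complex.I / m) with hζdef
  have hζ : IsPrimitiveRoot ζ m := Complex.isPrimitiveRoot_exp m hm.ne'
  set d : ℕ := Nat.gcd m t with hddef
  have hgcd' : Nat.gcd m (t * a) = d := by
    rw [Nat.gcd_comm, hgcd, Nat.gcd_comm]
  set n : ℕ := m / d with hndef
  -- second product equals a ^ d
  have hsecond : (∏ j ∈ (Finset.Icc 1 m).filter (fun j => m ∣ j * t),
      ∑ k ∈ Finset.range a, ζ ^ (k * j * t)) = (a : ℂ) ^ d := by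
    have hconst : ∀ j ∈ (Finset.Icc 1 m).filter (fun j => m ∣ j * t),
        (∑ k ∈ Finset.range a, ζ ^ (k * j * t)) = (a : ℂ) := by
      intro j hj
      rw [Finset.mem_filter] at hj
      have hone : ∀ k ∈ Finset.range a, ζ ^ (k * j * t) = 1 := by
        intro k _
        rw [hζ.pow_eq_one_iff_dvd]
        rw [mul_assoc]
        exact hj.2.mul_left k
      rw [Finset.sum_congr rfl hone]
      simp
    rw [Finset.prod_congr rfl hconst, Finset.prod_const]
    congr 1
    -- card of the filtered set is d
    have hcard : ((Finset.Icc 1 m).filter (fun j => m ∣ j * t)).card = d := by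
      have hiff : ∀ j, m ∣ j * t ↔ n ∣ j := fun j => aux_dvd_iff hm hζ t j
      have : (Finset.Icc 1 m).filter (fun j => m ∣ j * t) =
          (Finset.Ioc 0 m).filter (fun j => n ∣ j) := by
        ext j
        simp only [Finset.mem_filter, Finset.mem_Icc, Finset.mem_Ioc, hiff j]
        omega
      rw [this, Nat.Ioc_filter_dvd_card_eq_div]
      have hdm : d ∣ m := Nat.gcd_dvd_left m t
      have hd : 0 < d := Nat.gcd_pos_of_pos_left t hm
      have hn : 0 < n := Nat.div_pos (Nat.le_of_dvd hm hdm) hd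
      rw [hndef]
      exact Nat.div_div_self hdm hm.ne'
    rw [hcard]
  -- first product equals 1
  have hne : ∀ j ∈ (Finset.Icc 1 m).filter (fun j => ¬ m ∣ j * t),
      (1 - ζ ^ (j * t)) ≠ 0 := by
    intro j hj
    rw [Finset.mem_filter] at hj
    intro h
    apply hj.2
    rw [← hζ.pow_eq_one_iff_dvd]
    linear_combination -h
  have hfilter : (Finset.Icc 1 m).filter (fun j => ¬ m ∣ j * t) =
      (Finset.Icc 1 m).filter (fun j => ¬ m ∣ j * (t * a)) := by
    apply Finset.filter_congr
    intro j _
    have h1 := aux_dvd_iff hm hζ t j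
    have h2 := aux_dvd_iff hm hζ (t * a) j
    rw [hgcd'] at h2
    simp only [h1, h2, hddef]
  have hnum : (∏ j ∈ (Finset.Icc 1 m).filter (fun j => ¬ m ∣ j * t),
      (1 - ζ ^ (j * t * a))) = ((n : ℕ) : ℂ) ^ d := by
    have : ∀ j ∈ (Finset.Icc 1 m).filter (fun j => ¬ m ∣ j * t),
        (1 - ζ ^ (j * t * a)) = (1 - ζ ^ (j * (t * a))) := by
      intro j _; rw [mul_assoc]
    rw [Finset.prod_congr rfl this, hfilter]
    have := aux_main hm hζ (t * a)
    rw [hgcd'] at this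
    rw [this]
  have hden : (∏ j ∈ (Finset.Icc 1 m).filter (fun j => ¬ m ∣ j * t),
      (1 - ζ ^ (j * t))) = ((n : ℕ) : ℂ) ^ d := aux_main hm hζ t
  have hfirst : (∏ j ∈ (Finset.Icc 1 m).filter (fun j => ¬ m ∣ j * t),
      (1 - ζ ^ (j * t * a)) / (1 - ζ ^ (j * t))) = 1 := by
    rw [Finset.prod_div_distrib, hnum, hden, div_self]
    rw [← hden]
    exact Finset.prod_ne_zero_iff.2 hne
  rw [hfirst, hsecond, one_mul]
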